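/- Let φ(x) = (√3/π) ∫₀ˣ (arctan u³)/u² du and let f be the solution on [0,∞) of the ODE f' = (1 − φ(f))^{1/2} with f(0) = 0. Then f is defined on all of [0,∞), f is strictly increasing, 0 < f'(r) < 1 for r > 0, f''(r) < 0 for r > 0, f(r) → ∞ as r → ∞, and f'(r) → 0 as r → ∞. -/

import Mathlib

open Filter Real

/-- φ(x) = (√3/π) ∫₀ˣ (arctan u³)/u² du. -/
noncomputable def phi (x : ℝ) : ℝ :=
  (Real.sqrt 3 / π) * ∫ u in (0:ℝ)..x, Real.arctan (u ^ 3) / u ^ 2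


noncomputable def hh (u : ℝ) : ℝ := Real.arctan (u ^ 3) / u ^ 2

lemma abs_arctan_le (x : ℝ) : |Real.arctan x| ≤ |x| := by
  have := Convex.norm_image_sub_le_of_norm_hasDerivWithin_le
    (f := Real.arctan) (f' := fun y => 1/(1+y^2)) (C := 1)
    (fun y _ => (Real.hasDerivAt_arctan y).hasDerivWithinAt)
    (fun y _ => by
      rw [Real.norm_eq_abs, abs_of_pos (by positivity)]
      rw [div_le_one (by positivity)]; nlinarith [sq_nonneg y])
    (convex_univ) (Set.mem_univ 0) (Set.mem_univ x)
  simpa [Real.arctan_zero] using this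

lemma abs_hh_le (u : ℝ) : |hh u| ≤ |u| := by
  rcases eq_or_ne u 0 with rfl | hu
  · simp [hh]
  · have h2 : (0:ℝ) < u ^ 2 := by positivity
    rw [hh, abs_div, abs_of_pos h2, div_le_iff₀ h2]
    calc |Real.arctan (u^3)| ≤ |u^3| := abs_arctan_le _
    _ = |u| * u^2 := by
        rw [pow_succ, abs_mul]; rw [abs_of_nonneg (sq_nonneg u)]; ring
    
lemma hh_cont : Continuous hh := by
  rw [continuous_iff_continuousAt]
  intro u
  rcases eq_or_ne u 0 with rfl | hu
  · have : Tendsto hh (nhds 0) (nhds 0) := by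
      apply squeeze_zero_norm (fun t => by simpa using abs_hh_le t)
      have : Tendsto (fun t : ℝ => |t|) (nhds 0) (nhds |(0:ℝ)|) := continuous_abs.tendsto 0
      simpa using this
    simpa [ContinuousAt, hh] using this
  · exact ContinuousAt.div ((Real.continuous_arctan.comp (continuous_pow 3)).continuousAt)
      ((continuous_pow 2).continuousAt) (by positivity)

lemma hh_pos {u : ℝ} (hu : 0 < u) : 0 < hh u := by
  have : 0 < Real.arctan (u^3) := by simpa using Real.arctan_strictMono (show (0:ℝ) < u^3 by positivity)
  exact div_pos this (by positivity)

lemma hh_odd (u : ℝ) : hh (-u) = - hh u := by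
  have : (-u)^3 = -(u^3) := by ring
  simp [hh, this, neg_div]


noncomputable def FF (u : ℝ) : ℝ :=
  -(Real.arctan (u^3) / u) + (1/2) * (Real.log (1+u^2) - (1/2) * Real.log (u^4 - u^2 + 1)
    + Real.sqrt 3 * Real.arctan ((2*u^2 - 1)/Real.sqrt 3))

lemma sqrt3_pos : (0:ℝ) < Real.sqrt 3 := Real.sqrt_pos.2 (by norm_num)
lemma sqrt3_sq : Real.sqrt 3 ^ 2 = 3 := Real.sq_sqrt (by norm_num)

lemma quartic_pos (u : ℝ) : 0 < u^4 - u^2 + 1 := by nlinarith [sq_nonneg (u^2 - 1), sq_nonneg u]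

lemma FF_hasDerivAt {u : ℝ} (hu : u ≠ 0) :
    HasDerivAt FF (Real.arctan (u^3) / u^2) u := by
  have h6 : (1:ℝ) + (u^3)^2 ≠ 0 := by positivity
  have hq : u^4 - u^2 + 1 ≠ 0 := (quartic_pos u).ne'
  have h12 : (1:ℝ) + u^2 ≠ 0 := by positivity
  have hs := sqrt3_pos.ne'
  have A : HasDerivAt (fun u : ℝ => Real.arctan (u^3) / u)
      ((1 / (1 + (u^3)^2) * (3*u^2) * u - Real.arctan (u^3) * 1) / u^2) u :=
    ((hasDerivAt_pow 3 u).arctan.div (hasDerivAt_id u) hu)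
  have B : HasDerivAt (fun u : ℝ => Real.log (1+u^2)) ((2*u) / (1+u^2)) u := by
    have : HasDerivAt (fun u : ℝ => 1+u^2) (2*u) u := by
      simpa using ((hasDerivAt_pow 2 u).const_add 1)
    exact this.log h12
  have C : HasDerivAt (fun u : ℝ => Real.log (u^4 - u^2 + 1)) ((4*u^3 - 2*u) / (u^4-u^2+1)) u := by
    have : HasDerivAt (fun u : ℝ => u^4 - u^2 + 1) (4*u^3 - 2*u) u := by
      simpa using (((hasDerivAt_pow 4 u).sub (hasDerivAt_pow 2 u)).add_const 1)
    exact this.log hq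
  have D : HasDerivAt (fun u : ℝ => Real.arctan ((2*u^2 - 1)/Real.sqrt 3))
      (1 / (1 + ((2*u^2-1)/Real.sqrt 3)^2) * ((4*u)/Real.sqrt 3)) u := by
    have : HasDerivAt (fun u : ℝ => (2*u^2 - 1)/Real.sqrt 3) ((4*u)/Real.sqrt 3) u := by
      have : HasDerivAt (fun u : ℝ => 2*u^2 - 1) (4*u) u := by
        have := ((hasDerivAt_pow 2 u).const_mul 2).sub_const 1
        exact this.congr_deriv (by ring)
      exact this.div_const _
    exact this.arctan
  have E := (A.neg.add ((((B.sub (C.const_mul (1/2))).add (D.const_mul (Real.sqrt 3)))).const_mul (1/2)))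
  refine E.congr_deriv ?_
  have h3 : Real.sqrt 3 * Real.sqrt 3 = 3 := by
    have := sqrt3_sq; nlinarith
  have hq' : u^2*(u^2-1)+1 ≠ 0 := by
    have := quartic_pos u; nlinarith
  field_simp [hq, hq']
  simp only [sqrt3_sq]
  ring




lemma phi_eq (x : ℝ) : phi x = (Real.sqrt 3 / π) * ∫ u in (0:ℝ)..x, hh u := rfl

lemma c_pos : 0 < Real.sqrt 3 / π := div_pos (Real.sqrt_pos.2 (by norm_num)) Real.pi_pos

lemma phi_hasDerivAt (x : ℝ) : HasDerivAt phi ((Real.sqrt 3 / π) * hh x) x := by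
  have := (hh_cont.integral_hasStrictDerivAt 0 x).hasDerivAt
  exact (this.const_mul (Real.sqrt 3 / π))

lemma phi_zero : phi 0 = 0 := by simp [phi_eq]

lemma phi_even (x : ℝ) : phi (-x) = phi x := by
  have h1 : (∫ u in (0:ℝ)..x, hh (-u)) = ∫ u in (-x)..(0:ℝ), hh u := by
    simpa using intervalIntegral.integral_comp_neg (a := (0:ℝ)) (b := x) (f := hh)
  have h2 : (∫ u in (0:ℝ)..x, hh (-u)) = -∫ u in (0:ℝ)..x, hh u := by
    simp [hh_odd, intervalIntegral.integral_neg]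
  have h3 : (∫ u in (-x)..(0:ℝ), hh u) = -∫ u in (0:ℝ)..(-x), hh u :=
    (intervalIntegral.integral_symm _ _)
  rw [phi_eq, phi_eq]
  have : (∫ u in (0:ℝ)..(-x), hh u) = ∫ u in (0:ℝ)..x, hh u := by
    have := h1.symm.trans h2
    rw [h3] at this
    linarith
  rw [this]

lemma phi_strictMonoOn : StrictMonoOn phi (Set.Ici (0:ℝ)) := by
  apply strictMonoOn_of_deriv_pos (convex_Ici 0)
    (fun x _ => (phi_hasDerivAt x).continuousAt.continuousWithinAt)
  intro x hx
  rw [interior_Ici] at hx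
  rw [(phi_hasDerivAt x).deriv]
  exact mul_pos c_pos (hh_pos hx)

lemma phi_nonneg (x : ℝ) : 0 ≤ phi x := by
  rcases le_or_gt 0 x with hx | hx
  · rcases eq_or_lt_of_le hx with rfl | hx
    · simp [phi_zero]
    · have := phi_strictMonoOn (Set.self_mem_Ici) (le_of_lt hx) hx
      rw [phi_zero] at this; linarith
  · rw [← phi_even]
    have := phi_strictMonoOn (Set.self_mem_Ici) (by simp; linarith) (by linarith : (0:ℝ) < -x)
    rw [phi_zero] at this; linarith



lemma arctan_inv_sqrt3 : Real.arctan (1 / Real.sqrt 3) = π / 6 := by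
  exact Real.arctan_eq_of_tan_eq Real.tan_pi_div_six
    ⟨by linarith [Real.pi_pos], by linarith [Real.pi_pos]⟩

lemma FF_tendsto_zero : Tendsto FF (nhdsWithin 0 (Set.Ioi 0)) (nhds (-(Real.sqrt 3 * π / 12))) := by
  have h1 : Tendsto (fun u : ℝ => Real.arctan (u^3) / u) (nhdsWithin 0 (Set.Ioi 0)) (nhds 0) := by
    have heq : ∀ u ∈ Set.Ioi (0:ℝ), hh u * u = Real.arctan (u^3) / u := by
      intro u hu
      have : (u:ℝ) ≠ 0 := ne_of_gt hu
      rw [hh]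
      field_simp
    have : Tendsto (fun u : ℝ => hh u * u) (nhdsWithin 0 (Set.Ioi 0)) (nhds (hh 0 * 0)) :=
      ((hh_cont.tendsto 0).mono_left nhdsWithin_le_nhds).mul
        (tendsto_id.mono_left nhdsWithin_le_nhds)
    rw [mul_zero] at this
    exact this.congr' (eventually_nhdsWithin_of_forall heq)
  have h2 : Tendsto (fun u : ℝ => Real.log (1+u^2)) (nhdsWithin 0 (Set.Ioi 0)) (nhds 0) := by
    have : ContinuousAt (fun u : ℝ => Real.log (1+u^2)) 0 :=
      (Real.continuousAt_log (by norm_num)).comp (by fun_prop)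
    simpa using this.tendsto.mono_left (nhdsWithin_le_nhds (s := Set.Ioi 0))
  have h3 : Tendsto (fun u : ℝ => Real.log (u^4-u^2+1)) (nhdsWithin 0 (Set.Ioi 0)) (nhds 0) := by
    have : ContinuousAt (fun u : ℝ => Real.log (u^4-u^2+1)) 0 :=
      (Real.continuousAt_log (by norm_num)).comp (by fun_prop)
    simpa using this.tendsto.mono_left (nhdsWithin_le_nhds (s := Set.Ioi 0))
  have h4 : Tendsto (fun u : ℝ => Real.arctan ((2*u^2-1)/Real.sqrt 3)) (nhdsWithin 0 (Set.Ioi 0))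
      (nhds (-(π/6))) := by
    have : ContinuousAt (fun u : ℝ => Real.arctan ((2*u^2-1)/Real.sqrt 3)) 0 :=
      Real.continuous_arctan.continuousAt.comp (by fun_prop)
    have h0 : Real.arctan ((2*(0:ℝ)^2-1)/Real.sqrt 3) = -(π/6) := by
      rw [show (2*(0:ℝ)^2-1)/Real.sqrt 3 = -(1/Real.sqrt 3) by ring]
      rw [Real.arctan_neg, arctan_inv_sqrt3]
    have h := this.tendsto.mono_left (nhdsWithin_le_nhds (s := Set.Ioi 0))
    rw [h0] at h
    exact h
  have := (h1.neg).add ((((h2.sub (h3.const_mul (1/2))).add (h4.const_mul (Real.sqrt 3)))).const_mul (1/2))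
  unfold FF
  convert this using 2 <;> ring

lemma FF_tendsto_atTop : Tendsto FF atTop (nhds (Real.sqrt 3 * π / 4)) := by
  have h1 : Tendsto (fun u : ℝ => Real.arctan (u^3) / u) atTop (nhds 0) := by
    apply squeeze_zero_norm' (a := fun u : ℝ => (π/2) * u⁻¹)
    · filter_upwards [eventually_gt_atTop (0:ℝ)] with u hu
      rw [Real.norm_eq_abs, abs_div, abs_of_pos hu]
      rw [div_le_iff₀ hu, mul_assoc, inv_mul_cancel₀ hu.ne', mul_one]
      have := Real.neg_pi_div_two_lt_arctan (u^3)
      have := Real.arctan_lt_pi_div_two (u^3)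
      rw [abs_le]; constructor <;> linarith
    · simpa using tendsto_inv_atTop_zero.const_mul (π/2)
  have h2 : Tendsto (fun u : ℝ => Real.log (1+u^2) - (1/2) * Real.log (u^4-u^2+1)) atTop (nhds 0) := by
    have key : ∀ u : ℝ, Real.log (1+u^2) - (1/2) * Real.log (u^4-u^2+1)
        = (1/2) * Real.log ((1+u^2)^2/(u^4-u^2+1)) := by
      intro u
      rw [Real.log_div (by positivity) (quartic_pos u).ne', Real.log_pow]
      push_cast; ring
    simp only [key]
    have hr : Tendsto (fun u : ℝ => (1+u^2)^2/(u^4-u^2+1)) atTop (nhds 1) := by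
      have hv : Tendsto (fun u : ℝ => u⁻¹) atTop (nhds 0) := tendsto_inv_atTop_zero
      have hnum : Tendsto (fun u : ℝ => ((u⁻¹)^2+1)^2) atTop (nhds 1) := by
        have : Tendsto (fun u : ℝ => ((u⁻¹)^2+1)^2) atTop (nhds ((0^2+1)^2 : ℝ)) :=
          (((hv.pow 2).add_const 1).pow 2)
        simpa using this
      have hden : Tendsto (fun u : ℝ => 1-(u⁻¹)^2+(u⁻¹)^4) atTop (nhds 1) := by
        have : Tendsto (fun u : ℝ => 1-(u⁻¹)^2+(u⁻¹)^4) atTop (nhds (1-0^2+0^4 : ℝ)) :=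
          (((hv.pow 2).const_sub 1).add (hv.pow 4))
        simpa using this
      have := hnum.div hden one_ne_zero
      rw [show (1:ℝ)/1 = 1 by norm_num] at this
      apply this.congr'
      filter_upwards [eventually_ge_atTop (1:ℝ)] with u hu
      have hu0 : u ≠ 0 := by linarith
      have hp1 : (0:ℝ) < u^4 - u^2 + 1 := quartic_pos u
      have hp2 : (0:ℝ) < 1-(u⁻¹)^2+(u⁻¹)^4 := by
        have := quartic_pos u⁻¹; nlinarith [this]
      show (u⁻¹ ^ 2 + 1) ^ 2 / (1 - u⁻¹ ^ 2 + u⁻¹ ^ 4) = (1 + u ^ 2) ^ 2 / (u ^ 4 - u ^ 2 + 1)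
      rw [div_eq_div_iff hp2.ne' hp1.ne']
      field_simp
    have hlog : Tendsto (fun u : ℝ => Real.log ((1+u^2)^2/(u^4-u^2+1))) atTop (nhds 0) := by
      have := (Real.continuousAt_log (one_ne_zero)).tendsto.comp hr
      simpa [Function.comp_def] using this
    have := hlog.const_mul (1/2)
    simpa using this
  have h4 : Tendsto (fun u : ℝ => Real.arctan ((2*u^2-1)/Real.sqrt 3)) atTop (nhds (π/2)) := by
    have hin : Tendsto (fun u : ℝ => (2*u^2-1)/Real.sqrt 3) atTop atTop := by
      apply Tendsto.atTop_div_const sqrt3_pos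
      apply tendsto_atTop_add_const_right
      exact (tendsto_pow_atTop (two_ne_zero)).const_mul_atTop (by norm_num)
    exact (Real.tendsto_arctan_atTop.mono_right nhdsWithin_le_nhds).comp hin
  have h := (h1.neg).add ((h2.add (h4.const_mul (Real.sqrt 3))).const_mul (1/2))
  have h' : Tendsto FF atTop (nhds (-(0:ℝ) + 1/2*(0 + Real.sqrt 3 * (π/2)))) := h
  rw [show (-(0:ℝ) + 1/2*(0 + Real.sqrt 3 * (π/2))) = Real.sqrt 3 * π / 4 by ring] at h'
  exact h'



lemma hh_intInt (a b : ℝ) : IntervalIntegrable hh MeasureTheory.volume a b :=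
  hh_cont.intervalIntegrable a b

lemma int_eq {a b : ℝ} (ha : 0 < a) (hb : 0 < b) :
    ∫ u in a..b, hh u = FF b - FF a := by
  apply intervalIntegral.integral_eq_sub_of_hasDerivAt
  · intro t ht
    have ht0 : 0 < t := lt_of_lt_of_le (lt_min ha hb) ht.1
    exact FF_hasDerivAt ht0.ne'
  · exact hh_intInt a b

lemma int01 : ∫ u in (0:ℝ)..1, hh u = FF 1 + Real.sqrt 3 * π / 12 := by
  have T1 : Tendsto (fun a : ℝ => (∫ u in (0:ℝ)..1, hh u) - ∫ u in (0:ℝ)..a, hh u)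
      (nhdsWithin 0 (Set.Ioi 0)) (nhds (∫ u in (0:ℝ)..1, hh u)) := by
    have hP : ContinuousAt (fun a : ℝ => ∫ u in (0:ℝ)..a, hh u) 0 :=
      ((hh_cont.integral_hasStrictDerivAt 0 0).hasDerivAt).continuousAt
    have := (tendsto_const_nhds (x := ∫ u in (0:ℝ)..1, hh u)
      (f := nhdsWithin 0 (Set.Ioi 0))).sub (hP.tendsto.mono_left nhdsWithin_le_nhds)
    simpa using this
  have T2 : Tendsto (fun a : ℝ => FF 1 - FF a) (nhdsWithin 0 (Set.Ioi 0))
      (nhds (FF 1 + Real.sqrt 3 * π / 12)) := by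
    have := (tendsto_const_nhds (x := FF 1)
      (f := nhdsWithin 0 (Set.Ioi 0))).sub FF_tendsto_zero
    simpa [sub_neg_eq_add] using this
  have hE : ∀ᶠ a in nhdsWithin 0 (Set.Ioi 0),
      (∫ u in (0:ℝ)..1, hh u) - (∫ u in (0:ℝ)..a, hh u) = FF 1 - FF a := by
    apply eventually_nhdsWithin_of_forall
    intro a ha
    have hadd : (∫ u in (0:ℝ)..a, hh u) + (∫ u in a..1, hh u) = ∫ u in (0:ℝ)..1, hh u :=
      intervalIntegral.integral_add_adjacent_intervals (hh_intInt 0 a) (hh_intInt a 1)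
    rw [int_eq ha one_pos] at hadd
    linarith
  exact tendsto_nhds_unique (T1.congr' hE) T2

lemma phi_tendsto_one : Tendsto phi atTop (nhds 1) := by
  have key : ∀ᶠ x in atTop, (Real.sqrt 3 / π) * (FF x + Real.sqrt 3 * π / 12) = phi x := by
    filter_upwards [eventually_gt_atTop (0:ℝ)] with x hx
    rw [phi_eq]
    have hadd : (∫ u in (0:ℝ)..1, hh u) + (∫ u in (1:ℝ)..x, hh u) = ∫ u in (0:ℝ)..x, hh u :=
      intervalIntegral.integral_add_adjacent_intervals (hh_intInt 0 1) (hh_intInt 1 x)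
    rw [← hadd, int01, int_eq one_pos hx]
    ring
  have h3 : Real.sqrt 3 * Real.sqrt 3 = 3 := Real.mul_self_sqrt (by norm_num)
  have := ((FF_tendsto_atTop.add_const (Real.sqrt 3 * π / 12)).const_mul (Real.sqrt 3 / π))
  rw [show Real.sqrt 3 / π * (Real.sqrt 3 * π / 4 + Real.sqrt 3 * π / 12) = 1 by
    field_simp
    nlinarith [Real.pi_pos, h3]] at this
  exact this.congr' key

lemma phi_lt_one (x : ℝ) : phi x < 1 := by
  have main : ∀ y : ℝ, 0 ≤ y → phi y < 1 := by
    intro y hy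
    have h1 : phi y < phi (y+1) := phi_strictMonoOn hy (by simp; linarith) (by linarith)
    have h2 : phi (y+1) ≤ 1 := by
      apply ge_of_tendsto phi_tendsto_one
      filter_upwards [eventually_ge_atTop (y+1)] with z hz
      exact (phi_strictMonoOn.monotoneOn (by simp; linarith) (by simp; linarith) hz)
    linarith
  rcases le_or_gt 0 x with hx | hx
  · exact main x hx
  · rw [← phi_even]; exact main (-x) (by linarith)



noncomputable def kk (u : ℝ) : ℝ := (Real.sqrt (1 - phi u))⁻¹

lemma one_sub_phi_pos (u : ℝ) : 0 < 1 - phi u := by linarith [phi_lt_one u]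

lemma sqrt_one_sub_phi_pos (u : ℝ) : 0 < Real.sqrt (1 - phi u) :=
  Real.sqrt_pos.2 (one_sub_phi_pos u)

lemma kk_pos (u : ℝ) : 0 < kk u := inv_pos.2 (sqrt_one_sub_phi_pos u)

lemma one_le_kk (u : ℝ) : 1 ≤ kk u := by
  rw [kk, le_inv_comm₀ one_pos (sqrt_one_sub_phi_pos u), inv_one]
  calc Real.sqrt (1 - phi u) ≤ Real.sqrt 1 := Real.sqrt_le_sqrt (by linarith [phi_nonneg u])
  _ = 1 := Real.sqrt_one

lemma phi_cont : Continuous phi :=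
  continuous_iff_continuousAt.2 fun x => (phi_hasDerivAt x).continuousAt

lemma kk_cont : Continuous kk := by
  apply Continuous.inv₀
  · exact Real.continuous_sqrt.comp (continuous_const.sub phi_cont)
  · exact fun u => (sqrt_one_sub_phi_pos u).ne'

noncomputable def gg (y : ℝ) : ℝ := ∫ u in (0:ℝ)..y, kk u

lemma gg_hasDerivAt (y : ℝ) : HasDerivAt gg (kk y) y :=
  (kk_cont.integral_hasStrictDerivAt 0 y).hasDerivAt

lemma gg_zero : gg 0 = 0 := by simp [gg]

lemma gg_strictMono : StrictMono gg :=
  strictMono_of_deriv_pos fun x => by rw [(gg_hasDerivAt x).deriv]; exact kk_pos x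

lemma gg_cont : Continuous gg :=
  continuous_iff_continuousAt.2 fun x => (gg_hasDerivAt x).continuousAt

lemma gg_ge {y : ℝ} (hy : 0 ≤ y) : y ≤ gg y := by
  have h1 : (∫ u in (0:ℝ)..y, (1:ℝ)) ≤ ∫ u in (0:ℝ)..y, kk u := by
    apply intervalIntegral.integral_mono_on hy
      (intervalIntegrable_const) (kk_cont.intervalIntegrable 0 y)
    intro u _; exact one_le_kk u
  simpa [gg] using h1

lemma gg_le {y : ℝ} (hy : y ≤ 0) : gg y ≤ y := by
  have h1 : (∫ u in y..(0:ℝ), (1:ℝ)) ≤ ∫ u in y..(0:ℝ), kk u := by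
    apply intervalIntegral.integral_mono_on hy
      (intervalIntegrable_const) (kk_cont.intervalIntegrable y 0)
    intro u _; exact one_le_kk u
  have h2 : gg y = -∫ u in y..(0:ℝ), kk u := by
    rw [gg, intervalIntegral.integral_symm]
  rw [h2]
  simp at h1
  linarith

lemma gg_atTop : Tendsto gg atTop atTop :=
  tendsto_atTop_mono' atTop
    (by filter_upwards [eventually_ge_atTop (0:ℝ)] with y hy; exact gg_ge hy) tendsto_id

lemma gg_atBot : Tendsto gg atBot atBot :=
  tendsto_atBot_mono' atBot
    (by filter_upwards [eventually_le_atBot (0:ℝ)] with y hy; exact gg_le hy) tendsto_id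

lemma gg_surj : Function.Surjective gg := gg_cont.surjective gg_atTop gg_atBot

noncomputable def EE : ℝ ≃o ℝ := StrictMono.orderIsoOfSurjective gg gg_strictMono gg_surj

noncomputable def ff : ℝ → ℝ := EE.symm

lemma gg_ff (x : ℝ) : gg (ff x) = x := by
  have := EE.apply_symm_apply x
  rwa [show ⇑EE = gg from StrictMono.coe_orderIsoOfSurjective gg gg_strictMono gg_surj] at this

lemma ff_gg (y : ℝ) : ff (gg y) = y := by
  have := EE.symm_apply_apply y
  rwa [show ⇑EE = gg from StrictMono.coe_orderIsoOfSurjective gg gg_strictMono gg_surj] at this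

lemma ff_zero : ff 0 = 0 := by
  have := ff_gg 0
  rwa [gg_zero] at this

lemma ff_strictMono : StrictMono ff := EE.symm.strictMono

lemma ff_cont : Continuous ff := OrderIso.continuous EE.symm

lemma ff_hasDerivAt (x : ℝ) : HasDerivAt ff (Real.sqrt (1 - phi (ff x))) x := by
  have h := HasDerivAt.of_local_left_inverse ff_cont.continuousAt
    (gg_hasDerivAt (ff x)) (kk_pos (ff x)).ne'
    (Eventually.of_forall fun y => gg_ff y)
  simpa [kk] using h

lemma ff_pos {r : ℝ} (hr : 0 < r) : 0 < ff r := by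
  rw [← ff_zero]; exact ff_strictMono hr

lemma phi_pos {t : ℝ} (ht : 0 < t) : 0 < phi t := by
  have := phi_strictMonoOn Set.self_mem_Ici (le_of_lt ht) ht
  rwa [phi_zero] at this

lemma deriv_ff : deriv ff = fun x => Real.sqrt (1 - phi (ff x)) :=
  funext fun x => (ff_hasDerivAt x).deriv

lemma ff_atTop : Tendsto ff atTop atTop := by
  rw [tendsto_atTop]
  intro b
  filter_upwards [eventually_ge_atTop (gg b)] with x hx
  calc b = ff (gg b) := (ff_gg b).symm
  _ ≤ ff x := ff_strictMono.monotone hx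

theorem exists_solution_f :
    ∃ f : ℝ → ℝ, f 0 = 0 ∧
      (∀ r ∈ Set.Ici (0:ℝ), HasDerivAt f (Real.sqrt (1 - phi (f r))) r) ∧
      StrictMonoOn f (Set.Ici (0:ℝ)) ∧
      (∀ r > (0:ℝ), 0 < deriv f r ∧ deriv f r < 1) ∧
      (∀ r > (0:ℝ), deriv (deriv f) r < 0) ∧
      Tendsto f atTop atTop ∧
      Tendsto (deriv f) atTop (nhds 0) := by
  refine ⟨ff, ff_zero, fun r _ => ff_hasDerivAt r, ff_strictMono.strictMonoOn _, ?_, ?_, ff_atTop, ?_⟩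
  · intro r hr
    rw [deriv_ff]
    constructor
    · exact sqrt_one_sub_phi_pos (ff r)
    · have h := Real.sqrt_lt_sqrt (le_of_lt (one_sub_phi_pos (ff r)))
        (show 1 - phi (ff r) < 1 by linarith [phi_pos (ff_pos hr)])
      rwa [Real.sqrt_one] at h
  · intro r hr
    rw [deriv_ff]
    have hw : HasDerivAt (fun x => 1 - phi (ff x))
        (-((Real.sqrt 3 / π) * hh (ff r) * Real.sqrt (1 - phi (ff r)))) r := by
      have := ((phi_hasDerivAt (ff r)).comp r (ff_hasDerivAt r)).const_sub 1
      exact this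
    have hs := hw.sqrt (one_sub_phi_pos (ff r)).ne'
    rw [hs.deriv]
    apply div_neg_of_neg_of_pos
    · have h1 : 0 < (Real.sqrt 3 / π) * hh (ff r) * Real.sqrt (1 - phi (ff r)) :=
        mul_pos (mul_pos c_pos (hh_pos (ff_pos hr))) (sqrt_one_sub_phi_pos (ff r))
      linarith
    · have := sqrt_one_sub_phi_pos (ff r)
      linarith
  · rw [deriv_ff]
    have h1 : Tendsto (fun x => phi (ff x)) atTop (nhds 1) := phi_tendsto_one.comp ff_atTop
    have h2 : Tendsto (fun x => 1 - phi (ff x)) atTop (nhds 0) := by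
      have := (tendsto_const_nhds (x := (1:ℝ)) (f := atTop)).sub h1
      simpa using this
    have := (Real.continuous_sqrt.tendsto 0).comp h2
    simpa [Function.comp_def] using this
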